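/- For every B>0 and every k_⊥ ∈ ℝ², the integral operator I_{k_⊥} on L²(ℝ²) with kernel I_{k_⊥}(x_⊥,y_⊥) = P₀(x_⊥,y_⊥) e^{k_⊥∧(x_⊥−y_⊥)/2} e^{i k_⊥·(x_⊥+y_⊥)/2} (where a∧b = a₁b₂ − a₂b₁) is a bounded operator, and its operator norm satisfies ‖I_{k_⊥}‖ ≤ 2 e^{|k_⊥|²/(4B)}. -/

import Mathlib

open MeasureTheory

noncomputable section

/-- We model `ℝ³` as `(ℝ × ℝ) × ℝ`, writing `x = (x_⊥, x₃)`. -/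
abbrev R3 := (ℝ × ℝ) × ℝ

/-- The Euclidean norm `|x|` on `ℝ³`. -/
def enorm3 (x : R3) : ℝ := Real.sqrt (x.1.1 ^ 2 + x.1.2 ^ 2 + x.2 ^ 2)

/-- The partial derivative `∂₁φ`. -/
def d1 (φ : R3 → ℂ) (x : R3) : ℂ := fderiv ℝ φ x ((1, 0), 0)

/-- The partial derivative `∂₂φ`. -/
def d2 (φ : R3 → ℂ) (x : R3) : ℂ := fderiv ℝ φ x ((0, 1), 0)

/-- The partial derivative `∂₃φ`. -/
def d3 (φ : R3 → ℂ) (x : R3) : ℂ := fderiv ℝ φ x ((0, 0), 1)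

/-- The perpendicular part of the magnetic kinetic energy in the symmetric gauge
`A(x) = ((-B/2)x₂, (B/2)x₁, 0)`:
`∫ (|−i∂₁φ−(B/2)x₂φ|² + |−i∂₂φ+(B/2)x₁φ|²) dx`. -/
def kinPerp (B : ℝ) (φ : R3 → ℂ) : ℝ :=
  ∫ x : R3, (‖-Complex.I * d1 φ x - ((B / 2 * x.1.2 : ℝ) : ℂ) * φ x‖ ^ 2
    + ‖-Complex.I * d2 φ x + ((B / 2 * x.1.1 : ℝ) : ℂ) * φ x‖ ^ 2)

/-- The full magnetic kinetic energy
`∫ (|−i∂₁φ−(B/2)x₂φ|² + |−i∂₂φ+(B/2)x₁φ|² + |∂₃φ|²) dx`. -/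
def kinEnergy (B : ℝ) (φ : R3 → ℂ) : ℝ :=
  ∫ x : R3, (‖-Complex.I * d1 φ x - ((B / 2 * x.1.2 : ℝ) : ℂ) * φ x‖ ^ 2
    + ‖-Complex.I * d2 φ x + ((B / 2 * x.1.1 : ℝ) : ℂ) * φ x‖ ^ 2
    + ‖d3 φ x‖ ^ 2)

/-- The Coulomb self-energy `∬ |φ(x)|²|φ(y)|²|x−y|⁻¹ dx dy` (without the factor 1/2). -/
def coulomb (φ : R3 → ℂ) : ℝ :=
  ∫ x : R3, ∫ y : R3, ‖φ x‖ ^ 2 * ‖φ y‖ ^ 2 / enorm3 (x - y)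

/-- `D(|φ|²,|φ|²) = (1/2) ∬ |φ(x)|²|φ(y)|²|x−y|⁻¹ dx dy`. -/
def Dself (φ : R3 → ℂ) : ℝ := (1 / 2) * coulomb φ

/-- The Pekar functional `E_{B,α}[φ]`. -/
def pekar (B α : ℝ) (φ : R3 → ℂ) : ℝ := kinEnergy B φ - α / 2 * coulomb φ

/-- `φ ∈ C_c^∞(ℝ³, ℂ)`. -/
def IsCcSmooth (φ : R3 → ℂ) : Prop := ContDiff ℝ (⊤ : ℕ∞) φ ∧ HasCompactSupport φ

/-- The Pekar ground state energy `E^c_{B,α}`, an infimum over normalized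
compactly supported smooth functions. -/
def groundE (B α : ℝ) : ℝ :=
  sInf {E : ℝ | ∃ φ : R3 → ℂ, IsCcSmooth φ ∧ (∫ x : R3, ‖φ x‖ ^ 2) = 1 ∧ E = pekar B α φ}

/-- The `L²(ℝ³)` norm `‖φ‖`. -/
def L2norm (φ : R3 → ℂ) : ℝ := Real.sqrt (∫ x : R3, ‖φ x‖ ^ 2)

/-- The `L²(ℝ³)` norm `‖∂₃φ‖`. -/
def L2normD3 (φ : R3 → ℂ) : ℝ := Real.sqrt (∫ x : R3, ‖d3 φ x‖ ^ 2)

/-- The kernel `K_B(x_⊥) = ln(1+√(1+(ln B)²|x_⊥|²)) − ln(√B |x_⊥|)` on `ℝ²`. -/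
def Kker (B : ℝ) (p : ℝ × ℝ) : ℝ :=
  Real.log (1 + Real.sqrt (1 + Real.log B ^ 2 * (p.1 ^ 2 + p.2 ^ 2)))
    - Real.log (Real.sqrt B * Real.sqrt (p.1 ^ 2 + p.2 ^ 2))

/-- The remainder term
`R_B^{(2)}(φ) = ∫_ℝ ∬_{ℝ²×ℝ²} |φ(x_⊥,x₃)|² |φ(y_⊥,x₃)|² K_B(x_⊥−y_⊥) dy_⊥ dx_⊥ dx₃`. -/
def R2err (B : ℝ) (φ : R3 → ℂ) : ℝ :=
  ∫ x3 : ℝ, ∫ xp : ℝ × ℝ, ∫ yp : ℝ × ℝ,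
    ‖φ (xp, x3)‖ ^ 2 * ‖φ (yp, x3)‖ ^ 2 * Kker B (xp - yp)

/-- The integral kernel of the lowest Landau level projection:
`P₀(x_⊥,y_⊥) = (B/(2π)) e^{−B|x_⊥−y_⊥|²/4} e^{iB(x₁y₂−x₂y₁)/2}`. -/
def P0ker (B : ℝ) (x y : ℝ × ℝ) : ℂ :=
  ((B / (2 * Real.pi) * Real.exp (-B * ((x.1 - y.1) ^ 2 + (x.2 - y.2) ^ 2) / 4) : ℝ) : ℂ)
    * Complex.exp (Complex.I * ((B * (x.1 * y.2 - x.2 * y.1) / 2 : ℝ) : ℂ))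

/-- The lowest Landau level projection acting on functions on `ℝ³` (in the `x_⊥` variables). -/
def P0 (B : ℝ) (φ : R3 → ℂ) : R3 → ℂ :=
  fun x => ∫ yp : ℝ × ℝ, P0ker B x.1 yp * φ (yp, x.2)

/-- `P_> φ = φ − P₀ φ`. -/
def Pgt (B : ℝ) (φ : R3 → ℂ) : R3 → ℂ := fun x => φ x - P0 B φ x

/-- The quadratic form of the two-dimensional Landau Hamiltonian
`H_B = (−i∂₁ + A₁)² + (−i∂₂ + A₂)²` in the symmetric gauge. -/
def kin2 (B : ℝ) (g : ℝ × ℝ → ℂ) : ℝ :=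
  ∫ x : ℝ × ℝ, (‖-Complex.I * fderiv ℝ g x (1, 0) - ((B / 2 * x.2 : ℝ) : ℂ) * g x‖ ^ 2
    + ‖-Complex.I * fderiv ℝ g x (0, 1) + ((B / 2 * x.1 : ℝ) : ℂ) * g x‖ ^ 2)

/-- The kernel `I_{k_⊥}(x_⊥,y_⊥) = P₀(x_⊥,y_⊥) e^{k_⊥∧(x_⊥−y_⊥)/2} e^{i k_⊥·(x_⊥+y_⊥)/2}`
with `a∧b = a₁b₂ − a₂b₁`. -/
def Iker (B : ℝ) (k x y : ℝ × ℝ) : ℂ :=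
  P0ker B x y * ((Real.exp ((k.1 * (x.2 - y.2) - k.2 * (x.1 - y.1)) / 2) : ℝ) : ℂ)
    * Complex.exp (Complex.I * (((k.1 * (x.1 + y.1) + k.2 * (x.2 + y.2)) / 2 : ℝ) : ℂ))


section IkerAux

lemma gauss_lin (a b : ℝ) (ha : 0 < a) :
    ∫ x : ℝ, Real.exp (-a * x^2 + b*x) = Real.sqrt (Real.pi/a) * Real.exp (b^2/(4*a)) := by
  have h : ∀ x : ℝ, Real.exp (-a*x^2 + b*x)
      = Real.exp (-a * (x + (-b/(2*a)))^2) * Real.exp (b^2/(4*a)) := by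
    intro x; rw [← Real.exp_add]; congr 1; field_simp; ring
  simp_rw [h, integral_mul_const]
  rw [integral_add_right_eq_self (fun x ↦ Real.exp (-a * x^2)) (-b/(2*a)), integral_gaussian]

lemma gauss_lin_int (a b : ℝ) (ha : 0 < a) :
    Integrable (fun x : ℝ => Real.exp (-a * x^2 + b*x)) := by
  have h : ∀ x : ℝ, Real.exp (-a*x^2 + b*x)
      = Real.exp (-a * (x + (-b/(2*a)))^2) * Real.exp (b^2/(4*a)) := by
    intro x; rw [← Real.exp_add]; congr 1; field_simp; ring
  simp_rw [h]
  exact ((integrable_exp_neg_mul_sq ha).comp_add_right _).mul_const _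

/-- The absolute value of the kernel `Iker`, as a function of `x - y`. -/
def gker (B : ℝ) (k : ℝ × ℝ) (z : ℝ × ℝ) : ℝ :=
  B/(2*Real.pi) * Real.exp (-B*(z.1^2+z.2^2)/4 + (k.1*z.2 - k.2*z.1)/2)

lemma gker_nonneg (B : ℝ) (hB : 0 < B) (k z : ℝ × ℝ) : 0 ≤ gker B k z := by
  unfold gker
  have : (0:ℝ) < Real.pi := Real.pi_pos
  positivity

lemma norm_Iker (B : ℝ) (hB : 0 < B) (k x y : ℝ × ℝ) :
    ‖Iker B k x y‖ = gker B k (x - y) := by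
  have h1 : ∀ r : ℝ, ‖Complex.exp (Complex.I * (r:ℂ))‖ = 1 := by
    intro r; rw [Complex.norm_exp]; simp
  have hpi : (0:ℝ) < Real.pi := Real.pi_pos
  simp only [Iker, P0ker, norm_mul, Complex.norm_real, Real.norm_eq_abs, h1, mul_one,
    gker, Prod.fst_sub, Prod.snd_sub]
  rw [abs_of_nonneg (by positivity), abs_of_nonneg (Real.exp_nonneg _), mul_assoc,
    Real.abs_exp, ← Real.exp_add]

lemma gker_cont (B : ℝ) (k : ℝ × ℝ) : Continuous (gker B k) := by
  unfold gker; fun_prop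

lemma Iker_cont (B : ℝ) (k : ℝ × ℝ) :
    Continuous (fun p : (ℝ×ℝ)×(ℝ×ℝ) => Iker B k p.1 p.2) := by
  unfold Iker P0ker; fun_prop

lemma gker_eq (B : ℝ) (k : ℝ × ℝ) (z : ℝ × ℝ) :
    gker B k z = (B/(2*Real.pi) * Real.exp (-(B/4) * z.1^2 + (-k.2/2)*z.1))
      * Real.exp (-(B/4) * z.2^2 + (k.1/2)*z.2) := by
  unfold gker; rw [mul_assoc, ← Real.exp_add]; ring_nf

lemma gker_integrable (B : ℝ) (hB : 0 < B) (k : ℝ × ℝ) :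
    Integrable (gker B k) (volume : Measure (ℝ × ℝ)) := by
  have ha : (0:ℝ) < B/4 := by linarith
  have := ((gauss_lin_int (B/4) (-k.2/2) ha).const_mul (B/(2*Real.pi))).mul_prod
    (gauss_lin_int (B/4) (k.1/2) ha)
  rw [Measure.volume_eq_prod]
  exact this.congr (by filter_upwards with z using (gker_eq B k z).symm)

lemma gker_integral (B : ℝ) (hB : 0 < B) (k : ℝ × ℝ) :
    ∫ z : ℝ × ℝ, gker B k z = 2 * Real.exp ((k.1^2+k.2^2)/(4*B)) := by
  have ha : (0:ℝ) < B/4 := by linarith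
  have hπ := Real.pi_pos
  calc ∫ z : ℝ × ℝ, gker B k z
      = ∫ z : ℝ × ℝ, (B/(2*Real.pi) * Real.exp (-(B/4) * z.1^2 + (-k.2/2)*z.1))
        * Real.exp (-(B/4) * z.2^2 + (k.1/2)*z.2) := by
        exact integral_congr_ae (by filter_upwards with z using gker_eq B k z)
    _ = (∫ t : ℝ, B/(2*Real.pi) * Real.exp (-(B/4) * t^2 + (-k.2/2)*t))
        * ∫ t : ℝ, Real.exp (-(B/4) * t^2 + (k.1/2)*t) := by
        rw [Measure.volume_eq_prod]
        exact integral_prod_mul (fun t : ℝ => B/(2*Real.pi) * Real.exp (-(B/4)*t^2 + (-k.2/2)*t))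
          (fun t : ℝ => Real.exp (-(B/4)*t^2 + (k.1/2)*t))
    _ = 2 * Real.exp ((k.1^2+k.2^2)/(4*B)) := by
        rw [integral_const_mul, gauss_lin _ _ ha, gauss_lin _ _ ha]
        have hs : Real.sqrt (Real.pi/(B/4)) * Real.sqrt (Real.pi/(B/4)) = Real.pi/(B/4) :=
          Real.mul_self_sqrt (by positivity)
        have h1 : (-k.2/2)^2/(4*(B/4)) = k.2^2/(4*B) := by
          rw [div_eq_div_iff (by positivity) (by positivity)]; ring
        have h2 : (k.1/2)^2/(4*(B/4)) = k.1^2/(4*B) := by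
          rw [div_eq_div_iff (by positivity) (by positivity)]; ring
        rw [h1, h2,
          show (k.1^2+k.2^2)/(4*B) = k.1^2/(4*B) + k.2^2/(4*B) by ring, Real.exp_add]
        have h3 : B/(2*Real.pi)*(Real.pi/(B/4)) = 2 := by
          field_simp; ring
        calc B/(2*Real.pi) * (Real.sqrt (Real.pi/(B/4)) * Real.exp (k.2^2/(4*B)))
              * (Real.sqrt (Real.pi/(B/4)) * Real.exp (k.1^2/(4*B)))
            = (B/(2*Real.pi) * (Real.sqrt (Real.pi/(B/4)) * Real.sqrt (Real.pi/(B/4))))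
              * (Real.exp (k.2^2/(4*B)) * Real.exp (k.1^2/(4*B))) := by ring
          _ = 2 * (Real.exp (k.1^2/(4*B)) * Real.exp (k.2^2/(4*B))) := by
              rw [hs, h3]; ring

end IkerAux

/-- The integral operator with kernel `I_{k_⊥}` is bounded on `L²(ℝ²)` with norm
at most `2 e^{|k_⊥|²/4B}`. -/
theorem Iker_operator_bound (B : ℝ) (hB : 0 < B) (k : ℝ × ℝ) (f : ℝ × ℝ → ℂ)
    (hf : MemLp f 2 (volume : Measure (ℝ × ℝ))) :
    MemLp (fun x : ℝ × ℝ => ∫ y : ℝ × ℝ, Iker B k x y * f y) 2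
        (volume : Measure (ℝ × ℝ)) ∧
    Real.sqrt (∫ x : ℝ × ℝ, ‖∫ y : ℝ × ℝ, Iker B k x y * f y‖ ^ 2)
      ≤ 2 * Real.exp ((k.1 ^ 2 + k.2 ^ 2) / (4 * B))
        * Real.sqrt (∫ y : ℝ × ℝ, ‖f y‖ ^ 2) := by
  have hpi := Real.pi_pos
  set C : ℝ := 2 * Real.exp ((k.1 ^ 2 + k.2 ^ 2) / (4 * B)) with hCdef
  have hC0 : 0 ≤ C := by positivity
  set Ce : ENNReal := ENNReal.ofReal C with hCedef
  have hCene : Ce ≠ ⊤ := ENNReal.ofReal_ne_top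
  set g : (ℝ×ℝ) → ℝ := gker B k with hgdef
  have hgm : Measurable fun z : ℝ×ℝ => ENNReal.ofReal (g z) :=
    (ENNReal.continuous_ofReal.comp (gker_cont B k)).measurable
  have hCe : (∫⁻ z : ℝ×ℝ, ENNReal.ofReal (g z)) = Ce := by
    rw [← ofReal_integral_eq_lintegral_ofReal (gker_integrable B hB k)
      (ae_of_all _ (gker_nonneg B hB k))]
    congr 1
    rw [gker_integral B hB k]
  have hrow : ∀ x : ℝ×ℝ, (∫⁻ y : ℝ×ℝ, ENNReal.ofReal (g (x - y))) = Ce := by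
    intro x
    rw [(Measure.measurePreserving_sub_left volume x).lintegral_comp hgm]
    exact hCe
  have hcol : ∀ y : ℝ×ℝ, (∫⁻ x : ℝ×ℝ, ENNReal.ofReal (g (x - y))) = Ce := by
    intro y
    rw [(measurePreserving_sub_right volume y).lintegral_comp hgm]
    exact hCe
  set F := fun x : ℝ×ℝ => ∫ y : ℝ×ℝ, Iker B k x y * f y with hFdef
  have hFm : AEStronglyMeasurable F (volume : Measure (ℝ×ℝ)) := by
    have h1 : AEStronglyMeasurable (fun p : (ℝ×ℝ)×(ℝ×ℝ) => Iker B k p.1 p.2 * f p.2)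
        ((volume : Measure (ℝ×ℝ)).prod volume) :=
      ((Iker_cont B k).aestronglyMeasurable).mul hf.1.comp_snd
    exact h1.integral_prod_right'
  set L : ENNReal := ∫⁻ y : ℝ×ℝ, (‖f y‖₊ : ENNReal) ^ (2:ℝ) with hLdef
  have hL : L < ⊤ := by
    have h2 := hf.2
    rw [eLpNorm_eq_lintegral_rpow_enorm_toReal (by norm_num) (by norm_num)] at h2
    simp only [ENNReal.toReal_ofNat] at h2
    exact (ENNReal.rpow_lt_top_iff_of_pos (by norm_num : (0:ℝ) < 1/2)).mp h2
  -- pointwise Schur bound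
  have key : ∀ x : ℝ×ℝ, (‖F x‖₊ : ENNReal) ^ (2:ℝ)
      ≤ Ce * ∫⁻ y : ℝ×ℝ, ENNReal.ofReal (g (x - y)) * (‖f y‖₊ : ENNReal) ^ (2:ℝ) := by
    intro x
    set S : ENNReal := ∫⁻ y : ℝ×ℝ, ENNReal.ofReal (g (x - y)) * (‖f y‖₊ : ENNReal) ^ (2:ℝ) with hSdef
    have h1 : (‖F x‖₊ : ENNReal) ≤ ∫⁻ y : ℝ×ℝ, ENNReal.ofReal (g (x - y)) * (‖f y‖₊ : ENNReal) := by
      refine le_trans (enorm_integral_le_lintegral_enorm _) (le_of_eq ?_)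
      refine lintegral_congr fun y => ?_
      rw [enorm_mul]
      congr 1
      rw [← ofReal_norm, norm_Iker B hB k x y]
    have h2 : (∫⁻ y : ℝ×ℝ, ENNReal.ofReal (g (x - y)) * (‖f y‖₊ : ENNReal))
        ≤ Ce ^ (1/2:ℝ) * S ^ (1/2:ℝ) := by
      have hu : AEMeasurable (fun y : ℝ×ℝ => (ENNReal.ofReal (g (x - y))) ^ (1/2:ℝ)) volume := by
        exact ((hgm.comp (measurable_const.sub measurable_id)).pow_const _).aemeasurable
      have hv : AEMeasurable
          (fun y : ℝ×ℝ => (ENNReal.ofReal (g (x - y))) ^ (1/2:ℝ) * (‖f y‖₊ : ENNReal)) volume :=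
        hu.mul hf.1.enorm
      have hCS := ENNReal.lintegral_mul_le_Lp_mul_Lq (volume : Measure (ℝ×ℝ))
        Real.HolderConjugate.two_two hu hv
      have heq1 : ∀ y : ℝ×ℝ, (ENNReal.ofReal (g (x - y))) ^ (1/2:ℝ)
          * ((ENNReal.ofReal (g (x - y))) ^ (1/2:ℝ) * (‖f y‖₊ : ENNReal))
          = ENNReal.ofReal (g (x - y)) * (‖f y‖₊ : ENNReal) := by
        intro y
        rw [← mul_assoc, ← ENNReal.rpow_add_of_nonneg _ _ (by norm_num) (by norm_num)]
        norm_num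
      have heq2 : ∀ y : ℝ×ℝ, ((ENNReal.ofReal (g (x - y))) ^ (1/2:ℝ)) ^ (2:ℝ)
          = ENNReal.ofReal (g (x - y)) := by
        intro y
        rw [← ENNReal.rpow_mul]
        norm_num
      have heq3 : ∀ y : ℝ×ℝ, ((ENNReal.ofReal (g (x - y))) ^ (1/2:ℝ) * (‖f y‖₊ : ENNReal)) ^ (2:ℝ)
          = ENNReal.ofReal (g (x - y)) * (‖f y‖₊ : ENNReal) ^ (2:ℝ) := by
        intro y
        rw [ENNReal.mul_rpow_of_nonneg _ _ (by norm_num), heq2 y]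
      calc (∫⁻ y : ℝ×ℝ, ENNReal.ofReal (g (x - y)) * (‖f y‖₊ : ENNReal))
          = ∫⁻ y : ℝ×ℝ, (ENNReal.ofReal (g (x - y))) ^ (1/2:ℝ)
            * ((ENNReal.ofReal (g (x - y))) ^ (1/2:ℝ) * (‖f y‖₊ : ENNReal)) :=
            (lintegral_congr fun y => (heq1 y).symm)
        _ ≤ (∫⁻ y : ℝ×ℝ, ((ENNReal.ofReal (g (x - y))) ^ (1/2:ℝ)) ^ (2:ℝ)) ^ (1/2:ℝ)
            * (∫⁻ y : ℝ×ℝ, ((ENNReal.ofReal (g (x - y))) ^ (1/2:ℝ)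
              * (‖f y‖₊ : ENNReal)) ^ (2:ℝ)) ^ (1/2:ℝ) := hCS
        _ = Ce ^ (1/2:ℝ) * S ^ (1/2:ℝ) := by
            rw [lintegral_congr heq2, lintegral_congr heq3, hrow x]
    calc (‖F x‖₊ : ENNReal) ^ (2:ℝ) ≤ (Ce ^ (1/2:ℝ) * S ^ (1/2:ℝ)) ^ (2:ℝ) :=
        ENNReal.rpow_le_rpow (h1.trans h2) (by norm_num)
      _ = Ce * S := by
          rw [ENNReal.mul_rpow_of_nonneg _ _ (by norm_num), ← ENNReal.rpow_mul,
            ← ENNReal.rpow_mul]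
          norm_num
  -- integrate
  set T : ENNReal := ∫⁻ x : ℝ×ℝ, (‖F x‖₊ : ENNReal) ^ (2:ℝ) with hTdef
  have hprodm : AEMeasurable
      (fun p : (ℝ×ℝ)×(ℝ×ℝ) => ENNReal.ofReal (g (p.1 - p.2)) * (‖f p.2‖₊ : ENNReal) ^ (2:ℝ))
      ((volume : Measure (ℝ×ℝ)).prod volume) := by
    refine AEMeasurable.mul ?_ ?_
    · exact (hgm.comp (measurable_fst.sub measurable_snd)).aemeasurable
    · exact (hf.1.comp_snd.enorm.pow_const _)
  have hT : T ≤ Ce * (Ce * L) := by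
    calc T ≤ ∫⁻ x : ℝ×ℝ, Ce * ∫⁻ y : ℝ×ℝ, ENNReal.ofReal (g (x - y))
          * (‖f y‖₊ : ENNReal) ^ (2:ℝ) := lintegral_mono key
      _ = Ce * ∫⁻ x : ℝ×ℝ, ∫⁻ y : ℝ×ℝ, ENNReal.ofReal (g (x - y))
          * (‖f y‖₊ : ENNReal) ^ (2:ℝ) := lintegral_const_mul' _ _ hCene
      _ = Ce * ∫⁻ y : ℝ×ℝ, ∫⁻ x : ℝ×ℝ, ENNReal.ofReal (g (x - y))
          * (‖f y‖₊ : ENNReal) ^ (2:ℝ) := by rw [lintegral_lintegral_swap hprodm]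
      _ = Ce * (Ce * L) := by
          congr 1
          calc (∫⁻ y : ℝ×ℝ, ∫⁻ x : ℝ×ℝ, ENNReal.ofReal (g (x - y))
                * (‖f y‖₊ : ENNReal) ^ (2:ℝ))
              = ∫⁻ y : ℝ×ℝ, (∫⁻ x : ℝ×ℝ, ENNReal.ofReal (g (x - y)))
                * (‖f y‖₊ : ENNReal) ^ (2:ℝ) := by
                refine lintegral_congr fun y => ?_
                exact lintegral_mul_const' _ _ (by
                  exact ENNReal.rpow_ne_top_of_nonneg (by norm_num) ENNReal.coe_ne_top)
            _ = ∫⁻ y : ℝ×ℝ, Ce * (‖f y‖₊ : ENNReal) ^ (2:ℝ) := by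
                refine lintegral_congr fun y => ?_; rw [hcol y]
            _ = Ce * L := lintegral_const_mul' _ _ hCene
  have hTfin : T < ⊤ :=
    lt_of_le_of_lt hT (ENNReal.mul_lt_top hCene.lt_top (ENNReal.mul_lt_top hCene.lt_top hL))
  constructor
  · refine ⟨hFm, ?_⟩
    rw [eLpNorm_eq_lintegral_rpow_enorm_toReal (by norm_num) (by norm_num)]
    simp only [ENNReal.toReal_ofNat]
    exact ENNReal.rpow_lt_top_of_nonneg (by norm_num) hTfin.ne
  · have hFint : (∫ x : ℝ×ℝ, ‖F x‖ ^ 2) = T.toReal := by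
      rw [integral_eq_lintegral_of_nonneg_ae (ae_of_all _ fun x => by positivity)
        ((hFm.norm.aemeasurable.pow_const 2).aestronglyMeasurable)]
      congr 1
      refine lintegral_congr fun x => ?_
      rw [ENNReal.ofReal_pow (norm_nonneg _), ofReal_norm, enorm_eq_nnnorm,
        ← ENNReal.rpow_natCast _ 2]
      norm_num
    have hfint : (∫ y : ℝ×ℝ, ‖f y‖ ^ 2) = L.toReal := by
      rw [integral_eq_lintegral_of_nonneg_ae (ae_of_all _ fun y => by positivity)
        ((hf.1.norm.aemeasurable.pow_const 2).aestronglyMeasurable)]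
      congr 1
      refine lintegral_congr fun y => ?_
      rw [ENNReal.ofReal_pow (norm_nonneg _), ofReal_norm, enorm_eq_nnnorm,
        ← ENNReal.rpow_natCast _ 2]
      norm_num
    rw [hFint, hfint]
    have hmono : T.toReal ≤ (Ce * (Ce * L)).toReal :=
      ENNReal.toReal_mono (ENNReal.mul_lt_top hCene.lt_top (ENNReal.mul_lt_top hCene.lt_top hL)).ne hT
    have hval : (Ce * (Ce * L)).toReal = C * (C * L.toReal) := by
      rw [ENNReal.toReal_mul, ENNReal.toReal_mul, ENNReal.toReal_ofReal hC0]
    calc Real.sqrt T.toReal ≤ Real.sqrt (C * (C * L.toReal)) := by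
          rw [← hval]; exact Real.sqrt_le_sqrt hmono
      _ = C * Real.sqrt L.toReal := by
          rw [show C * (C * L.toReal) = C^2 * L.toReal by ring, Real.sqrt_mul (by positivity),
            Real.sqrt_sq hC0]
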